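/- Let x, y, s, t be integers such that x^2 + s^2 - s^4 = t^2 and y^2 - 1 - t^2 - t^4 = s^2. Then (x,y,s,t) = (±u^2, ±(u^2+1), ±u, ±u) for some integer u. -/
import Mathlib

lemma sq_succ_le {a b : ℤ} (hb : 0 ≤ b) (h : b^2 < a^2) : (b+1)^2 ≤ a^2 := by
  have h1 : b < |a| := by nlinarith [abs_nonneg a, sq_abs a]
  have h2 : b + 1 ≤ |a| := h1
  nlinarith [sq_abs a, abs_nonneg a]

theorem stmt_9 (x y s t : ℤ)
    (h1 : x^2 + s^2 - s^4 = t^2) (h2 : y^2 - 1 - t^2 - t^4 = s^2) :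
    ∃ u : ℤ, (x = u^2 ∨ x = -u^2) ∧ (y = u^2 + 1 ∨ y = -(u^2 + 1)) ∧
      (s = u ∨ s = -u) ∧ (t = u ∨ t = -u) := by
  have hy2 : y^2 = t^4 + t^2 + 1 + s^2 := by linarith
  have h0 : (t^2)^2 < y^2 := by nlinarith [sq_nonneg s, sq_nonneg t]
  have hy3 : (t^2 + 1)^2 ≤ y^2 := sq_succ_le (sq_nonneg t) h0
  have hst : t^2 ≤ s^2 := by nlinarith
  by_cases heq : s^2 = t^2
  · refine ⟨s, ?_, ?_, Or.inl rfl, ?_⟩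
    · have hx : (x - s^2) * (x + s^2) = 0 := by linear_combination h1 - heq
      rcases mul_eq_zero.mp hx with h | h
      · exact Or.inl (by linarith)
      · exact Or.inr (by linarith)
    · have hy : (y - (s^2 + 1)) * (y + (s^2 + 1)) = 0 := by
        linear_combination h2 - heq - (s^2 + t^2) * heq
      rcases mul_eq_zero.mp hy with h | h
      · exact Or.inl (by linarith)
      · exact Or.inr (by linarith)
    · have hts : (t - s) * (t + s) = 0 := by linear_combination -heq
      rcases mul_eq_zero.mp hts with h | h
      · exact Or.inl (by linarith)
      · exact Or.inr (by linarith)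
  · exfalso
    have hne : t^2 + 1 ≤ s^2 := by
      rcases lt_or_eq_of_le hst with h | h
      · linarith
      · exact absurd h.symm heq
    have hx0 : |x|^2 < (s^2)^2 := by rw [sq_abs]; nlinarith
    have hx1 := sq_succ_le (abs_nonneg x) hx0
    have ht0 : t^2 + s^2 ≤ 1 := by nlinarith [sq_abs x, abs_nonneg x]
    have ht : t^2 = 0 := le_antisymm (by linarith) (sq_nonneg t)
    have hs : s^2 = 1 := le_antisymm (by linarith) (by linarith)
    have hy : y^2 = 2 := by linear_combination hy2 + (t^2 + 1) * ht + hs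
    have hy4 : y ≤ 1 := by nlinarith [sq_nonneg (y - 1)]
    have hy5 : -1 ≤ y := by nlinarith [sq_nonneg (y + 1)]
    interval_cases y <;> omega
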